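/- Let (ρ_n)_{n∈ℤ} be twice differentiable functions ρ_n : (0,∞) → ℝ satisfying the Ohyama recurrence for all n ∈ ℤ and all s > 0. For n ∈ ℤ and z > 0 set ζ = (z/2)^{1/3} and define σ_n(z) = 3^{1/4} ζ^{7/24} exp(−(9/8)ζ⁴ − (3/2)nζ²) ρ_n(3ζ²) if n is odd, and σ_n(z) = ζ^{−5/24} exp(−(9/8)ζ⁴ − (3/2)nζ²) ρ_n(3ζ²) if n is even. Then for every n ∈ ℤ and every z > 0 (derivatives with respect to z): σ_{n+1}(z) σ_{n−1}(z) + √3 ( z ( σ_n(z) σ_n″(z) − σ_n′(z)² ) + σ_n(z) σ_n′(z) ) = 0. -/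

import Mathlib

lemma hT_deriv (z : ℝ) (hz : 0 < z) :
    HasDerivAt (fun z : ℝ => (z / 2) ^ ((1 : ℝ) / 3))
      (1 / (6 * ((z / 2) ^ ((1 : ℝ) / 3)) ^ 2)) z := by
  have hx : (0:ℝ) < z / 2 := by linarith
  have h1 : HasDerivAt (fun z : ℝ => z / 2) (1/2) z := (hasDerivAt_id z).div_const 2
  have h2 : HasDerivAt (fun y : ℝ => y ^ ((1:ℝ)/3))
      ((1:ℝ)/3 * (z/2) ^ ((1:ℝ)/3 - 1)) (z/2) :=
    Real.hasDerivAt_rpow_const (Or.inl hx.ne')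
  have H := h2.comp z h1
  have e1 : ((z/2) ^ ((1:ℝ)/3)) ^ 2 = (z/2) ^ ((2:ℝ)/3) := by
    rw [← Real.rpow_natCast ((z/2) ^ ((1:ℝ)/3)) 2, ← Real.rpow_mul hx.le]
    norm_num
  have e2 : (1:ℝ)/3 * (z/2) ^ ((1:ℝ)/3 - 1) * (1/2)
      = 1 / (6 * ((z/2) ^ ((1:ℝ)/3)) ^ 2) := by
    rw [e1, show (1:ℝ)/3 - 1 = -((2:ℝ)/3) by norm_num, Real.rpow_neg hx.le]
    ring
  rw [e2] at H
  exact H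

lemma sig_d1 (K a m : ℝ) (f : ℝ → ℝ) (z : ℝ) (hz : 0 < z)
    (hf : DifferentiableAt ℝ f (3 * ((z / 2) ^ ((1 : ℝ) / 3)) ^ 2)) :
    HasDerivAt (fun z : ℝ => K * ((z / 2) ^ ((1 : ℝ) / 3)) ^ a
        * Real.exp (-(9 / 8) * ((z / 2) ^ ((1 : ℝ) / 3)) ^ 4
            - 3 / 2 * m * ((z / 2) ^ ((1 : ℝ) / 3)) ^ 2)
        * f (3 * ((z / 2) ^ ((1 : ℝ) / 3)) ^ 2))
      (K * ((z / 2) ^ ((1 : ℝ) / 3)) ^ a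
        * Real.exp (-(9 / 8) * ((z / 2) ^ ((1 : ℝ) / 3)) ^ 4
            - 3 / 2 * m * ((z / 2) ^ ((1 : ℝ) / 3)) ^ 2)
        * ((a - 9 / 2 * ((z / 2) ^ ((1 : ℝ) / 3)) ^ 4
              - 3 * m * ((z / 2) ^ ((1 : ℝ) / 3)) ^ 2)
              * f (3 * ((z / 2) ^ ((1 : ℝ) / 3)) ^ 2)
            + 6 * ((z / 2) ^ ((1 : ℝ) / 3)) ^ 2
              * deriv f (3 * ((z / 2) ^ ((1 : ℝ) / 3)) ^ 2))
        / (3 * z)) z := by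
  have hx : (0:ℝ) < z / 2 := by linarith
  have ht : (0:ℝ) < (z / 2) ^ ((1 : ℝ) / 3) := Real.rpow_pos_of_pos hx _
  set t : ℝ := (z / 2) ^ ((1 : ℝ) / 3) with htdef
  have h2t3 : 2 * t ^ 3 = z := by
    have : t ^ (3:ℕ) = z / 2 := by
      rw [htdef, ← Real.rpow_natCast ((z/2) ^ ((1:ℝ)/3)) 3, ← Real.rpow_mul hx.le]
      norm_num
    rw [this]; ring
  have hTz := hT_deriv z hz
  -- components
  have hA : HasDerivAt (fun z : ℝ => ((z / 2) ^ ((1 : ℝ) / 3)) ^ a)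
      (a * t ^ (a - 1) * (1 / (6 * t ^ 2))) z := by
    have := (Real.hasDerivAt_rpow_const (p := a) (Or.inl ht.ne')).comp z hTz; exact this
  have hg : HasDerivAt (fun z : ℝ => -(9 / 8) * ((z / 2) ^ ((1 : ℝ) / 3)) ^ 4
        - 3 / 2 * m * ((z / 2) ^ ((1 : ℝ) / 3)) ^ 2)
      (-(9/8) * ((4:ℕ) * t ^ (4-1) * (1 / (6 * t ^ 2)))
        - 3 / 2 * m * ((2:ℕ) * t ^ (2-1) * (1 / (6 * t ^ 2)))) z :=
    ((hTz.pow 4).const_mul (-(9/8))).sub ((hTz.pow 2).const_mul (3 / 2 * m))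
  have hE := hg.exp
  have hsz : HasDerivAt (fun z : ℝ => 3 * ((z / 2) ^ ((1 : ℝ) / 3)) ^ 2)
      (3 * ((2:ℕ) * t ^ (2-1) * (1 / (6 * t ^ 2)))) z := (hTz.pow 2).const_mul 3
  have hfz : HasDerivAt (fun z : ℝ => f (3 * ((z / 2) ^ ((1 : ℝ) / 3)) ^ 2))
      (deriv f (3 * t ^ 2) * (3 * ((2:ℕ) * t ^ (2-1) * (1 / (6 * t ^ 2))))) z :=
    hf.hasDerivAt.comp z hsz
  have H := ((hA.const_mul K).mul hE).mul hfz
  have hA1 : t ^ (a - 1) = t ^ a / t := by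
    rw [Real.rpow_sub ht, Real.rpow_one]
  convert H using 1
  · rfl
  · rfl
  · rfl
  simp only [Pi.mul_apply, Pi.add_apply]
  rw [← htdef, hA1, ← h2t3]
  push_cast
  field_simp
  ring

lemma sig_d2 (K a m : ℝ) (f : ℝ → ℝ) (z : ℝ) (hz : 0 < z)
    (hf : DifferentiableAt ℝ f (3 * ((z / 2) ^ ((1 : ℝ) / 3)) ^ 2))
    (hf' : DifferentiableAt ℝ (deriv f) (3 * ((z / 2) ^ ((1 : ℝ) / 3)) ^ 2)) :
    HasDerivAt (fun z : ℝ => K * ((z / 2) ^ ((1 : ℝ) / 3)) ^ a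
        * Real.exp (-(9 / 8) * ((z / 2) ^ ((1 : ℝ) / 3)) ^ 4
            - 3 / 2 * m * ((z / 2) ^ ((1 : ℝ) / 3)) ^ 2)
        * ((a - 9 / 2 * ((z / 2) ^ ((1 : ℝ) / 3)) ^ 4
              - 3 * m * ((z / 2) ^ ((1 : ℝ) / 3)) ^ 2)
              * f (3 * ((z / 2) ^ ((1 : ℝ) / 3)) ^ 2)
            + 6 * ((z / 2) ^ ((1 : ℝ) / 3)) ^ 2
              * deriv f (3 * ((z / 2) ^ ((1 : ℝ) / 3)) ^ 2))
        / (3 * z))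
      (K * ((z / 2) ^ ((1 : ℝ) / 3)) ^ a
        * Real.exp (-(9 / 8) * ((z / 2) ^ ((1 : ℝ) / 3)) ^ 4
            - 3 / 2 * m * ((z / 2) ^ ((1 : ℝ) / 3)) ^ 2)
        * ((a - 3 - 9 / 2 * ((z / 2) ^ ((1 : ℝ) / 3)) ^ 4
              - 3 * m * ((z / 2) ^ ((1 : ℝ) / 3)) ^ 2)
              * ((a - 9 / 2 * ((z / 2) ^ ((1 : ℝ) / 3)) ^ 4
                    - 3 * m * ((z / 2) ^ ((1 : ℝ) / 3)) ^ 2)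
                    * f (3 * ((z / 2) ^ ((1 : ℝ) / 3)) ^ 2)
                  + 6 * ((z / 2) ^ ((1 : ℝ) / 3)) ^ 2
                    * deriv f (3 * ((z / 2) ^ ((1 : ℝ) / 3)) ^ 2))
            + ((-18 * ((z / 2) ^ ((1 : ℝ) / 3)) ^ 4
                  - 6 * m * ((z / 2) ^ ((1 : ℝ) / 3)) ^ 2)
                  * f (3 * ((z / 2) ^ ((1 : ℝ) / 3)) ^ 2)
                + (a - 9 / 2 * ((z / 2) ^ ((1 : ℝ) / 3)) ^ 4
                    - 3 * m * ((z / 2) ^ ((1 : ℝ) / 3)) ^ 2)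
                  * (6 * ((z / 2) ^ ((1 : ℝ) / 3)) ^ 2)
                  * deriv f (3 * ((z / 2) ^ ((1 : ℝ) / 3)) ^ 2)
                + 12 * ((z / 2) ^ ((1 : ℝ) / 3)) ^ 2
                  * deriv f (3 * ((z / 2) ^ ((1 : ℝ) / 3)) ^ 2)
                + 36 * ((z / 2) ^ ((1 : ℝ) / 3)) ^ 4
                  * deriv (deriv f) (3 * ((z / 2) ^ ((1 : ℝ) / 3)) ^ 2)))
        / (9 * z ^ 2)) z := by
  have hx : (0:ℝ) < z / 2 := by linarith
  have ht : (0:ℝ) < (z / 2) ^ ((1 : ℝ) / 3) := Real.rpow_pos_of_pos hx _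
  set t : ℝ := (z / 2) ^ ((1 : ℝ) / 3) with htdef
  have h2t3 : 2 * t ^ 3 = z := by
    have : t ^ (3:ℕ) = z / 2 := by
      rw [htdef, ← Real.rpow_natCast ((z/2) ^ ((1:ℝ)/3)) 3, ← Real.rpow_mul hx.le]
      norm_num
    rw [this]; ring
  have hTz := hT_deriv z hz
  have hA : HasDerivAt (fun z : ℝ => ((z / 2) ^ ((1 : ℝ) / 3)) ^ a)
      (a * t ^ (a - 1) * (1 / (6 * t ^ 2))) z := by
    have := (Real.hasDerivAt_rpow_const (p := a) (Or.inl ht.ne')).comp z hTz; exact this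
  have hg : HasDerivAt (fun z : ℝ => -(9 / 8) * ((z / 2) ^ ((1 : ℝ) / 3)) ^ 4
        - 3 / 2 * m * ((z / 2) ^ ((1 : ℝ) / 3)) ^ 2)
      (-(9/8) * ((4:ℕ) * t ^ (4-1) * (1 / (6 * t ^ 2)))
        - 3 / 2 * m * ((2:ℕ) * t ^ (2-1) * (1 / (6 * t ^ 2)))) z :=
    ((hTz.pow 4).const_mul (-(9/8))).sub ((hTz.pow 2).const_mul (3 / 2 * m))
  have hE := hg.exp
  have hsz : HasDerivAt (fun z : ℝ => 3 * ((z / 2) ^ ((1 : ℝ) / 3)) ^ 2)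
      (3 * ((2:ℕ) * t ^ (2-1) * (1 / (6 * t ^ 2)))) z := (hTz.pow 2).const_mul 3
  have hfz : HasDerivAt (fun z : ℝ => f (3 * ((z / 2) ^ ((1 : ℝ) / 3)) ^ 2))
      (deriv f (3 * t ^ 2) * (3 * ((2:ℕ) * t ^ (2-1) * (1 / (6 * t ^ 2))))) z :=
    hf.hasDerivAt.comp z hsz
  have hqz : HasDerivAt (fun z : ℝ => deriv f (3 * ((z / 2) ^ ((1 : ℝ) / 3)) ^ 2))
      (deriv (deriv f) (3 * t ^ 2) * (3 * ((2:ℕ) * t ^ (2-1) * (1 / (6 * t ^ 2))))) z :=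
    by have := hf'.hasDerivAt.comp z hsz; exact this
  have hcoef : HasDerivAt (fun z : ℝ => a - 9 / 2 * ((z / 2) ^ ((1 : ℝ) / 3)) ^ 4
        - 3 * m * ((z / 2) ^ ((1 : ℝ) / 3)) ^ 2)
      (-(9 / 2 * ((4:ℕ) * t ^ (4-1) * (1 / (6 * t ^ 2))))
        - 3 * m * ((2:ℕ) * t ^ (2-1) * (1 / (6 * t ^ 2)))) z :=
    (((hTz.pow 4).const_mul (9/2)).const_sub a).sub ((hTz.pow 2).const_mul (3 * m))
  have h6t2 : HasDerivAt (fun z : ℝ => 6 * ((z / 2) ^ ((1 : ℝ) / 3)) ^ 2)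
      (6 * ((2:ℕ) * t ^ (2-1) * (1 / (6 * t ^ 2)))) z := (hTz.pow 2).const_mul 6
  have hSB := (hcoef.mul hfz).add (h6t2.mul hqz)
  have hNum := ((hA.const_mul K).mul hE).mul hSB
  have hDen : HasDerivAt (fun z : ℝ => 3 * z) 3 z := by
    simpa using (hasDerivAt_id z).const_mul (3:ℝ)
  have H := hNum.div hDen (by positivity)
  have hA1 : t ^ (a - 1) = t ^ a / t := by
    rw [Real.rpow_sub ht, Real.rpow_one]
  convert H using 1
  · rfl
  · rfl
  · rfl
  simp only [Pi.mul_apply, Pi.add_apply]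
  rw [← htdef, hA1, ← h2t3]
  push_cast
  field_simp
  ring


lemma final_odd (t z u up um A Bv E0 E1 Em c s3 SB SC Brk : ℝ)
    (ht : 0 < t) (hz : 0 < z)
    (hE : E1 * Em = E0 * E0) (hcc : c * c = s3) (hs3 : s3 * s3 = 3)
    (hAA : A * A = t * (Bv * Bv)) (h2t3 : 2 * t ^ 3 = z)
    (hKey : u * SC - SB * SB + 3 * (u * SB) = -6 * t ^ 2 * Brk)
    (hR : Brk = up * um) :
    (Bv * E1 * up) * (Bv * Em * um)
      + s3 * (z * ((c * A * E0 * u) * (c * A * E0 * SC / (9 * z ^ 2))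
            - (c * A * E0 * SB / (3 * z)) ^ 2)
          + (c * A * E0 * u) * (c * A * E0 * SB / (3 * z))) = 0 := by
  have hz0 : z ≠ 0 := ne_of_gt hz
  have ht0 : t ≠ 0 := ne_of_gt ht
  calc (Bv * E1 * up) * (Bv * Em * um)
      + s3 * (z * ((c * A * E0 * u) * (c * A * E0 * SC / (9 * z ^ 2))
            - (c * A * E0 * SB / (3 * z)) ^ 2)
          + (c * A * E0 * u) * (c * A * E0 * SB / (3 * z)))
      = Bv * Bv * (E1 * Em) * (up * um)
        + s3 * (c * c) * ((A * A) * ((E0 * E0)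
            * ((u * SC - SB * SB + 3 * (u * SB)) / (9 * z)))) := by
        field_simp
        ring
    _ = Bv * Bv * (E0 * E0) * (up * um)
        + 3 * ((t * (Bv * Bv)) * ((E0 * E0) * ((-6 * t ^ 2 * (up * um)) / (9 * z)))) := by
        rw [hE, hcc, hAA, hKey, hR, hs3]
    _ = 0 := by
        rw [← h2t3]
        field_simp
        ring

lemma final_even (t z u up um A Bv E0 E1 Em c s3 SB SC Brk : ℝ)
    (ht : 0 < t) (hz : 0 < z)
    (hE : E1 * Em = E0 * E0) (hcc : c * c = s3) (hs3 : s3 * s3 = 3)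
    (hAA : A * A = t * (Bv * Bv)) (h2t3 : 2 * t ^ 3 = z)
    (hKey : u * SC - SB * SB + 3 * (u * SB) = -6 * t ^ 2 * Brk)
    (hR : Brk = 3 * t ^ 2 * (up * um)) :
    (c * A * E1 * up) * (c * A * Em * um)
      + s3 * (z * ((Bv * E0 * u) * (Bv * E0 * SC / (9 * z ^ 2))
            - (Bv * E0 * SB / (3 * z)) ^ 2)
          + (Bv * E0 * u) * (Bv * E0 * SB / (3 * z))) = 0 := by
  have hz0 : z ≠ 0 := ne_of_gt hz
  have ht0 : t ≠ 0 := ne_of_gt ht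
  calc (c * A * E1 * up) * (c * A * Em * um)
      + s3 * (z * ((Bv * E0 * u) * (Bv * E0 * SC / (9 * z ^ 2))
            - (Bv * E0 * SB / (3 * z)) ^ 2)
          + (Bv * E0 * u) * (Bv * E0 * SB / (3 * z)))
      = (c * c) * ((A * A) * ((E1 * Em) * (up * um)))
        + s3 * ((Bv * Bv) * ((E0 * E0)
            * ((u * SC - SB * SB + 3 * (u * SB)) / (9 * z)))) := by
        field_simp
        ring
    _ = s3 * ((t * (Bv * Bv)) * ((E0 * E0) * (up * um)))
        + s3 * ((Bv * Bv) * ((E0 * E0) * ((-6 * t ^ 2 * (3 * t ^ 2 * (up * um))) / (9 * z)))) := by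
        rw [hcc, hAA, hE, hKey, hR]
    _ = 0 := by
        rw [← h2t3]
        field_simp
        ring




set_option maxHeartbeats 2000000 in
/-- From Ohyama polynomials to tau functions: if `(ρ_n)` are twice differentiable on
`(0,∞)` and satisfy the Ohyama recurrence, then the functions
`σ_n(z) = 3^{1/4} ζ^{7/24} e^{-(9/8)ζ⁴ - (3/2)nζ²} ρ_n(3ζ²)` (`n` odd) and
`σ_n(z) = ζ^{-5/24} e^{-(9/8)ζ⁴ - (3/2)nζ²} ρ_n(3ζ²)` (`n` even), with `ζ = (z/2)^{1/3}`,
satisfy the Toda-type bilinear relation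
`σ_{n+1}σ_{n-1} + √3(z(σ_nσ_n'' - (σ_n')²) + σ_nσ_n') = 0` for all `z > 0`. -/
theorem ohyama_to_tau_toda (ρ : ℤ → ℝ → ℝ)
    (hdiff : ∀ n : ℤ, ∀ s : ℝ, 0 < s →
      DifferentiableAt ℝ (ρ n) s ∧ DifferentiableAt ℝ (deriv (ρ n)) s)
    (hrec : ∀ n : ℤ, ∀ s : ℝ, 0 < s →
      (s + (n : ℝ)) * ρ n s ^ 2 - 2 * s * ρ n s * deriv (deriv (ρ n)) s
          + 2 * s * (deriv (ρ n) s) ^ 2 - 2 * ρ n s * deriv (ρ n) s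
        = if Odd n then ρ (n + 1) s * ρ (n - 1) s
          else s * (ρ (n + 1) s * ρ (n - 1) s))
    (σ : ℤ → ℝ → ℝ)
    (hσ : ∀ n : ℤ, ∀ z : ℝ, σ n z =
      if Odd n then
        3 ^ ((1 : ℝ) / 4) * ((z / 2) ^ ((1 : ℝ) / 3)) ^ ((7 : ℝ) / 24)
          * Real.exp (-(9 / 8) * ((z / 2) ^ ((1 : ℝ) / 3)) ^ 4
              - 3 / 2 * (n : ℝ) * ((z / 2) ^ ((1 : ℝ) / 3)) ^ 2)
          * ρ n (3 * ((z / 2) ^ ((1 : ℝ) / 3)) ^ 2)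
      else
        ((z / 2) ^ ((1 : ℝ) / 3)) ^ (-(5 : ℝ) / 24)
          * Real.exp (-(9 / 8) * ((z / 2) ^ ((1 : ℝ) / 3)) ^ 4
              - 3 / 2 * (n : ℝ) * ((z / 2) ^ ((1 : ℝ) / 3)) ^ 2)
          * ρ n (3 * ((z / 2) ^ ((1 : ℝ) / 3)) ^ 2)) :
    ∀ n : ℤ, ∀ z : ℝ, 0 < z →
      σ (n + 1) z * σ (n - 1) z
        + Real.sqrt 3 * (z * (σ n z * deriv (deriv (σ n)) z - (deriv (σ n) z) ^ 2)
            + σ n z * deriv (σ n) z) = 0 := by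
  intro n z hz
  have hx : (0:ℝ) < z / 2 := by linarith
  have ht0 : (0:ℝ) < (z / 2) ^ ((1 : ℝ) / 3) := Real.rpow_pos_of_pos hx _
  have hsp : ∀ y : ℝ, 0 < y → (0:ℝ) < 3 * ((y / 2) ^ ((1 : ℝ) / 3)) ^ 2 := by
    intro y hy
    have h := Real.rpow_pos_of_pos (show (0:ℝ) < y / 2 by linarith) ((1 : ℝ) / 3)
    nlinarith [mul_pos h h]
  by_cases hodd : Odd n
  · -- n odd
    have h1 : ¬ Odd (n + 1) := by rw [Int.odd_iff] at hodd ⊢; omega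
    have h2 : ¬ Odd (n - 1) := by rw [Int.odd_iff] at hodd ⊢; omega
    have hσn : σ n = (fun y : ℝ => 3 ^ ((1 : ℝ) / 4) * ((y / 2) ^ ((1 : ℝ) / 3)) ^ ((7 : ℝ) / 24) * Real.exp (-(9 / 8) * ((y / 2) ^ ((1 : ℝ) / 3)) ^ 4 - 3 / 2 * ↑n * ((y / 2) ^ ((1 : ℝ) / 3)) ^ 2) * (ρ n) (3 * ((y / 2) ^ ((1 : ℝ) / 3)) ^ 2)) := by
      funext y; rw [hσ n y, if_pos hodd]
    have hD1 : ∀ y : ℝ, 0 < y → HasDerivAt (σ n) (3 ^ ((1 : ℝ) / 4) * ((y / 2) ^ ((1 : ℝ) / 3)) ^ ((7 : ℝ) / 24) * Real.exp (-(9 / 8) * ((y / 2) ^ ((1 : ℝ) / 3)) ^ 4 - 3 / 2 * ↑n * ((y / 2) ^ ((1 : ℝ) / 3)) ^ 2) * ((((7 : ℝ) / 24) - 9 / 2 * ((y / 2) ^ ((1 : ℝ) / 3)) ^ 4 - 3 * ↑n * ((y / 2) ^ ((1 : ℝ) / 3)) ^ 2) * (ρ n) (3 * ((y / 2) ^ ((1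 : ℝ) / 3)) ^ 2) + 6 * ((y / 2) ^ ((1 : ℝ) / 3)) ^ 2 * deriv (ρ n) (3 * ((y / 2) ^ ((1 : ℝ) / 3)) ^ 2)) / (3 * y)) y := by
      intro y hy
      rw [hσn]
      exact sig_d1 (3 ^ ((1 : ℝ) / 4)) ((7 : ℝ) / 24) ((n : ℝ)) (ρ n) y hy (hdiff n _ (hsp y hy)).1
    have hd1 : deriv (σ n) z = (3 ^ ((1 : ℝ) / 4) * ((z / 2) ^ ((1 : ℝ) / 3)) ^ ((7 : ℝ) / 24) * Real.exp (-(9 / 8) * ((z / 2) ^ ((1 : ℝ) / 3)) ^ 4 - 3 / 2 * ↑n * ((z / 2) ^ ((1 : ℝ) / 3)) ^ 2) * ((((7 : ℝ) / 24) - 9 / 2 * ((z / 2) ^ ((1 : ℝ) / 3)) ^ 4 - 3 * ↑n * ((z / 2) ^ ((1 : ℝ) / 3)) ^ 2) * (ρ n) (3 * ((z / 2) ^ ((1 : ℝ) / 3)) ^ 2) + 6 * ((z / 2) ^ ((1 : ℝ) / 3)) ^ 2 * deriv (ρ n) (3 * ((z / 2) ^ ((1 : ℝ) / 3)) ^ 2))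 / (3 * z)) := (hD1 z hz).deriv
    have hev : deriv (σ n) =ᶠ[nhds z] (fun y : ℝ => (3 ^ ((1 : ℝ) / 4) * ((y / 2) ^ ((1 : ℝ) / 3)) ^ ((7 : ℝ) / 24) * Real.exp (-(9 / 8) * ((y / 2) ^ ((1 : ℝ) / 3)) ^ 4 - 3 / 2 * ↑n * ((y / 2) ^ ((1 : ℝ) / 3)) ^ 2) * ((((7 : ℝ) / 24) - 9 / 2 * ((y / 2) ^ ((1 : ℝ) / 3)) ^ 4 - 3 * ↑n * ((y / 2) ^ ((1 : ℝ) / 3)) ^ 2) * (ρ n) (3 * ((y / 2) ^ ((1 : ℝ) / 3)) ^ 2) + 6 * ((y / 2) ^ ((1 : ℝ) / 3)) ^ 2 * deriv (ρ n) (3 * ((y / 2) ^ ((1 : ℝ) / 3)) ^ 2)) / (3 * y))) := by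
      filter_upwards [Ioi_mem_nhds hz] with y hy
      exact (hD1 y hy).deriv
    have hd2 : deriv (deriv (σ n)) z = (3 ^ ((1 : ℝ) / 4) * ((z / 2) ^ ((1 : ℝ) / 3)) ^ ((7 : ℝ) / 24) * Real.exp (-(9 / 8) * ((z / 2) ^ ((1 : ℝ) / 3)) ^ 4 - 3 / 2 * ↑n * ((z / 2) ^ ((1 : ℝ) / 3)) ^ 2) * ((((7 : ℝ) / 24) - 3 - 9 / 2 * ((z / 2) ^ ((1 : ℝ) / 3)) ^ 4 - 3 * ↑n * ((z / 2) ^ ((1 : ℝ) / 3)) ^ 2) * ((((7 : ℝ) / 24) - 9 / 2 * ((z / 2) ^ ((1 : ℝ) / 3)) ^ 4 - 3 * ↑n * ((z / 2) ^ ((1 : ℝ) / 3)) ^ 2) * (ρ n) (3 * ((z / 2) ^ ((1 : ℝ) / 3)) ^ 2) + 6 * ((z / 2) ^ ((1 : ℝ) / 3)) ^ 2 * deriv (ρ n) (3 * ((z / 2) ^ ((1 : ℝ) / 3)) ^ 2)) + ((-18 * ((z / 2) ^ ((1 : ℝ) / 3)) ^ 4 - 6 * ↑n * ((z / 2) ^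 ((1 : ℝ) / 3)) ^ 2) * (ρ n) (3 * ((z / 2) ^ ((1 : ℝ) / 3)) ^ 2) + (((7 : ℝ) / 24) - 9 / 2 * ((z / 2) ^ ((1 : ℝ) / 3)) ^ 4 - 3 * ↑n * ((z / 2) ^ ((1 : ℝ) / 3)) ^ 2) * (6 * ((z / 2) ^ ((1 : ℝ) / 3)) ^ 2) * deriv (ρ n) (3 * ((z / 2) ^ ((1 : ℝ) / 3)) ^ 2) + 12 * ((z / 2) ^ ((1 : ℝ) / 3)) ^ 2 * deriv (ρ n) (3 * ((z / 2) ^ ((1 : ℝ) / 3)) ^ 2) + 36 * ((z / 2) ^ ((1 : ℝ) / 3)) ^ 4 * deriv (deriv (ρ n)) (3 * ((z / 2) ^ ((1 : ℝ) / 3)) ^ 2))) / (9 * z ^ 2)) := by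
      rw [hev.deriv_eq]
      exact (sig_d2 (3 ^ ((1 : ℝ) / 4)) ((7 : ℝ) / 24) ((n : ℝ)) (ρ n) z hz
        (hdiff n _ (hsp z hz)).1 (hdiff n _ (hsp z hz)).2).deriv
    have hσnz : σ n z = 3 ^ ((1 : ℝ) / 4) * ((z / 2) ^ ((1 : ℝ) / 3)) ^ ((7 : ℝ) / 24) * Real.exp (-(9 / 8) * ((z / 2) ^ ((1 : ℝ) / 3)) ^ 4 - 3 / 2 * ↑n * ((z / 2) ^ ((1 : ℝ) / 3)) ^ 2) * ρ n (3 * ((z / 2) ^ ((1 : ℝ) / 3)) ^ 2) := by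
      rw [hσ n z, if_pos hodd]
    have hσp : σ (n + 1) z = ((z / 2) ^ ((1 : ℝ) / 3)) ^ (-(5 : ℝ) / 24) * Real.exp (-(9 / 8) * ((z / 2) ^ ((1 : ℝ) / 3)) ^ 4 - 3 / 2 * ↑(n + 1) * ((z / 2) ^ ((1 : ℝ) / 3)) ^ 2) * ρ (n + 1) (3 * ((z / 2) ^ ((1 : ℝ) / 3)) ^ 2) := by
      rw [hσ (n + 1) z, if_neg h1]
    have hσm : σ (n - 1) z = ((z / 2) ^ ((1 : ℝ) / 3)) ^ (-(5 : ℝ) / 24) * Real.exp (-(9 / 8) * ((z / 2) ^ ((1 : ℝ) / 3)) ^ 4 - 3 / 2 * ↑(n - 1) * ((z / 2) ^ ((1 : ℝ) / 3)) ^ 2) * ρ (n - 1) (3 * ((z / 2) ^ ((1 : ℝ) / 3)) ^ 2) := by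
      rw [hσ (n - 1) z, if_neg h2]
    rw [hσp, hσm, hσnz, hd1, hd2]
    set t : ℝ := (z / 2) ^ ((1 : ℝ) / 3) with htdef
    have h2t3 : 2 * t ^ 3 = z := by
      have h3 : t ^ (3 : ℕ) = z / 2 := by
        rw [htdef, ← Real.rpow_natCast ((z / 2) ^ ((1 : ℝ) / 3)) 3, ← Real.rpow_mul hx.le]
        norm_num
      rw [h3]; ring
    have hR := hrec n (3 * t ^ 2) (by nlinarith [mul_pos ht0 ht0])
    rw [if_pos hodd] at hR
    have hE : Real.exp (-(9 / 8) * t ^ 4 - 3 / 2 * (↑(n + 1) : ℝ) * t ^ 2) * Real.exp (-(9 / 8) * t ^ 4 - 3 / 2 * (↑(n - 1) : ℝ) * t ^ 2) = Real.exp (-(9 / 8) * t ^ 4 - 3 / 2 * (↑n : ℝ) * t ^ 2) * Real.exp (-(9 / 8) * t ^ 4 - 3 / 2 * (↑n : ℝ) * t ^ 2) := by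
      rw [← Real.exp_add, ← Real.exp_add]
      congr 1
      push_cast
      ring
    have hcc : (3 : ℝ) ^ ((1 : ℝ) / 4) * 3 ^ ((1 : ℝ) / 4) = Real.sqrt 3 := by
      rw [← Real.rpow_add (by norm_num : (0:ℝ) < 3), Real.sqrt_eq_rpow]
      norm_num
    have hs3 : Real.sqrt 3 * Real.sqrt 3 = 3 := Real.mul_self_sqrt (by norm_num)
    have hAA : t ^ ((7 : ℝ) / 24) * t ^ ((7 : ℝ) / 24) = t * (t ^ (-(5 : ℝ) / 24) * t ^ (-(5 : ℝ) / 24)) := by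
      have e1 : t ^ ((7 : ℝ) / 24) * t ^ ((7 : ℝ) / 24) = t ^ ((7 : ℝ) / 12) := by
        rw [← Real.rpow_add ht0]; norm_num
      have e2 : t ^ (-(5 : ℝ) / 24) * t ^ (-(5 : ℝ) / 24) = t ^ (-(5 : ℝ) / 12) := by
        rw [← Real.rpow_add ht0]; norm_num
      have e3 : t * t ^ (-(5 : ℝ) / 12) = t ^ ((7 : ℝ) / 12) := by
        calc t * t ^ (-(5 : ℝ) / 12) = t ^ (1 : ℝ) * t ^ (-(5 : ℝ) / 12) := by
              rw [Real.rpow_one]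
          _ = t ^ ((1 : ℝ) + -(5 : ℝ) / 12) := by rw [← Real.rpow_add ht0]
          _ = t ^ ((7 : ℝ) / 12) := by norm_num
      rw [e1, e2, e3]
    linear_combination final_odd t z (ρ n (3 * t ^ 2)) (ρ (n + 1) (3 * t ^ 2)) (ρ (n - 1) (3 * t ^ 2)) (t ^ ((7 : ℝ) / 24)) (t ^ (-(5 : ℝ) / 24)) (Real.exp (-(9 / 8) * t ^ 4 - 3 / 2 * (↑n : ℝ) * t ^ 2)) (Real.exp (-(9 / 8) * t ^ 4 - 3 / 2 * (↑(n + 1) : ℝ) * t ^ 2)) (Real.exp (-(9 / 8) * t ^ 4 - 3 / 2 * (↑(n - 1) : ℝ) * t ^ 2)) (3 ^ ((1 : ℝ) / 4)) (Real.sqrt 3) (((((7 : ℝ) / 24) - 9 / 2 * t ^ 4 - 3 * (↑n : ℝ) * t ^ 2) * ρ n (3 * t ^ 2) + 6 * t ^ 2 * deriv (ρ n) (3 * t ^ 2))) (((((7 : ℝ) / 24) - 3 - 9 / 2 * t ^ 4 - 3 * (↑n : ℝ) * t ^ 2) * ((((7 : ℝ) / 24) - 9 / 2 * t ^ 4 -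 3 * (↑n : ℝ) * t ^ 2) * ρ n (3 * t ^ 2) + 6 * t ^ 2 * deriv (ρ n) (3 * t ^ 2)) + ((-18 * t ^ 4 - 6 * (↑n : ℝ) * t ^ 2) * ρ n (3 * t ^ 2) + (((7 : ℝ) / 24) - 9 / 2 * t ^ 4 - 3 * (↑n : ℝ) * t ^ 2) * (6 * t ^ 2) * deriv (ρ n) (3 * t ^ 2) + 12 * t ^ 2 * deriv (ρ n) (3 * t ^ 2) + 36 * t ^ 4 * deriv (deriv (ρ n)) (3 * t ^ 2)))) (((3 * t ^ 2 + (↑n : ℝ)) * ρ n (3 * t ^ 2) ^ 2 - 2 * (3 * t ^ 2) * ρ n (3 * t ^ 2) * deriv (deriv (ρ n)) (3 * t ^ 2) + 2 * (3 * t ^ 2) * (deriv (ρ n) (3 * t ^ 2)) ^ 2 - 2 * ρ n (3 * t ^ 2) * deriv (ρ n) (3 * t ^ 2))) ht0 hz hE hcc hs3 hAA h2t3 (by ring) hR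
  · -- n even
    have h1 : Odd (n + 1) := by rw [Int.odd_iff] at hodd ⊢; omega
    have h2 : Odd (n - 1) := by rw [Int.odd_iff] at hodd ⊢; omega
    have hσn : σ n = (fun y : ℝ => 1 * ((y / 2) ^ ((1 : ℝ) / 3)) ^ (-(5 : ℝ) / 24) * Real.exp (-(9 / 8) * ((y / 2) ^ ((1 : ℝ) / 3)) ^ 4 - 3 / 2 * ↑n * ((y / 2) ^ ((1 : ℝ) / 3)) ^ 2) * (ρ n) (3 * ((y / 2) ^ ((1 : ℝ) / 3)) ^ 2)) := by
      funext y; rw [hσ n y, if_neg hodd, one_mul]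
    have hD1 : ∀ y : ℝ, 0 < y → HasDerivAt (σ n) (1 * ((y / 2) ^ ((1 : ℝ) / 3)) ^ (-(5 : ℝ) / 24) * Real.exp (-(9 / 8) * ((y / 2) ^ ((1 : ℝ) / 3)) ^ 4 - 3 / 2 * ↑n * ((y / 2) ^ ((1 : ℝ) / 3)) ^ 2) * (((-(5 : ℝ) / 24) - 9 / 2 * ((y / 2) ^ ((1 : ℝ) / 3)) ^ 4 - 3 * ↑n * ((y / 2) ^ ((1 : ℝ) / 3)) ^ 2) * (ρ n) (3 * ((y / 2) ^ ((1 : ℝ) / 3)) ^ 2) + 6 * ((y / 2) ^ ((1 : ℝ) / 3)) ^ 2 * deriv (ρ n) (3 * ((y / 2) ^ ((1 : ℝ) / 3)) ^ 2)) / (3 * y)) y := by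
      intro y hy
      rw [hσn]
      exact sig_d1 (1) (-(5 : ℝ) / 24) ((n : ℝ)) (ρ n) y hy (hdiff n _ (hsp y hy)).1
    have hd1 : deriv (σ n) z = (1 * ((z / 2) ^ ((1 : ℝ) / 3)) ^ (-(5 : ℝ) / 24) * Real.exp (-(9 / 8) * ((z / 2) ^ ((1 : ℝ) / 3)) ^ 4 - 3 / 2 * ↑n * ((z / 2) ^ ((1 : ℝ) / 3)) ^ 2) * (((-(5 : ℝ) / 24) - 9 / 2 * ((z / 2) ^ ((1 : ℝ) / 3)) ^ 4 - 3 * ↑n * ((z / 2) ^ ((1 : ℝ) / 3)) ^ 2) * (ρ n) (3 * ((z / 2) ^ ((1 : ℝ) / 3)) ^ 2) + 6 * ((z / 2) ^ ((1 : ℝ) / 3)) ^ 2 * deriv (ρ n) (3 * ((z / 2) ^ ((1 : ℝ) / 3)) ^ 2)) / (3 * z)) := (hD1 z hz).deriv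
    have hev : deriv (σ n) =ᶠ[nhds z] (fun y : ℝ => (1 * ((y / 2) ^ ((1 : ℝ) / 3)) ^ (-(5 : ℝ) / 24) * Real.exp (-(9 / 8) * ((y / 2) ^ ((1 : ℝ) / 3)) ^ 4 - 3 / 2 * ↑n * ((y / 2) ^ ((1 : ℝ) / 3)) ^ 2) * (((-(5 : ℝ) / 24) - 9 / 2 * ((y / 2) ^ ((1 : ℝ) / 3)) ^ 4 - 3 * ↑n * ((y / 2) ^ ((1 : ℝ) / 3)) ^ 2) * (ρ n) (3 * ((y / 2) ^ ((1 : ℝ) / 3)) ^ 2) + 6 * ((y / 2) ^ ((1 : ℝ) / 3)) ^ 2 * deriv (ρ n) (3 * ((y / 2) ^ ((1 : ℝ) / 3)) ^ 2)) / (3 * y))) := by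
      filter_upwards [Ioi_mem_nhds hz] with y hy
      exact (hD1 y hy).deriv
    have hd2 : deriv (deriv (σ n)) z = (1 * ((z / 2) ^ ((1 : ℝ) / 3)) ^ (-(5 : ℝ) / 24) * Real.exp (-(9 / 8) * ((z / 2) ^ ((1 : ℝ) / 3)) ^ 4 - 3 / 2 * ↑n * ((z / 2) ^ ((1 : ℝ) / 3)) ^ 2) * (((-(5 : ℝ) / 24) - 3 - 9 / 2 * ((z / 2) ^ ((1 : ℝ) / 3)) ^ 4 - 3 * ↑n * ((z / 2) ^ ((1 : ℝ) / 3)) ^ 2) * (((-(5 : ℝ) / 24) - 9 / 2 * ((z / 2) ^ ((1 : ℝ) / 3)) ^ 4 - 3 * ↑n * ((z / 2) ^ ((1 : ℝ) / 3)) ^ 2) * (ρ n) (3 * ((z / 2) ^ ((1 : ℝ) / 3)) ^ 2) + 6 * ((z / 2) ^ ((1 : ℝ) / 3)) ^ 2 * deriv (ρ n) (3 * ((z / 2) ^ ((1 : ℝ) / 3)) ^ 2)) + ((-18 * ((z / 2) ^ ((1 : ℝ) / 3)) ^ 4 - 6 * ↑n * ((z / 2) ^ ((1 : ℝ) / 3))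 ^ 2) * (ρ n) (3 * ((z / 2) ^ ((1 : ℝ) / 3)) ^ 2) + ((-(5 : ℝ) / 24) - 9 / 2 * ((z / 2) ^ ((1 : ℝ) / 3)) ^ 4 - 3 * ↑n * ((z / 2) ^ ((1 : ℝ) / 3)) ^ 2) * (6 * ((z / 2) ^ ((1 : ℝ) / 3)) ^ 2) * deriv (ρ n) (3 * ((z / 2) ^ ((1 : ℝ) / 3)) ^ 2) + 12 * ((z / 2) ^ ((1 : ℝ) / 3)) ^ 2 * deriv (ρ n) (3 * ((z / 2) ^ ((1 : ℝ) / 3)) ^ 2) + 36 * ((z / 2) ^ ((1 : ℝ) / 3)) ^ 4 * deriv (deriv (ρ n)) (3 * ((z / 2) ^ ((1 : ℝ) / 3)) ^ 2))) / (9 * z ^ 2)) := by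
      rw [hev.deriv_eq]
      exact (sig_d2 (1) (-(5 : ℝ) / 24) ((n : ℝ)) (ρ n) z hz
        (hdiff n _ (hsp z hz)).1 (hdiff n _ (hsp z hz)).2).deriv
    have hσnz : σ n z = ((z / 2) ^ ((1 : ℝ) / 3)) ^ (-(5 : ℝ) / 24) * Real.exp (-(9 / 8) * ((z / 2) ^ ((1 : ℝ) / 3)) ^ 4 - 3 / 2 * ↑n * ((z / 2) ^ ((1 : ℝ) / 3)) ^ 2) * ρ n (3 * ((z / 2) ^ ((1 : ℝ) / 3)) ^ 2) := by
      rw [hσ n z, if_neg hodd]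
    have hσp : σ (n + 1) z = 3 ^ ((1 : ℝ) / 4) * ((z / 2) ^ ((1 : ℝ) / 3)) ^ ((7 : ℝ) / 24) * Real.exp (-(9 / 8) * ((z / 2) ^ ((1 : ℝ) / 3)) ^ 4 - 3 / 2 * ↑(n + 1) * ((z / 2) ^ ((1 : ℝ) / 3)) ^ 2) * ρ (n + 1) (3 * ((z / 2) ^ ((1 : ℝ) / 3)) ^ 2) := by
      rw [hσ (n + 1) z, if_pos h1]
    have hσm : σ (n - 1) z = 3 ^ ((1 : ℝ) / 4) * ((z / 2) ^ ((1 : ℝ) / 3)) ^ ((7 : ℝ) / 24) * Real.exp (-(9 / 8) * ((z / 2) ^ ((1 : ℝ) / 3)) ^ 4 - 3 / 2 * ↑(n - 1) * ((z / 2) ^ ((1 : ℝ) / 3)) ^ 2) * ρ (n - 1) (3 * ((z / 2) ^ ((1 : ℝ) / 3)) ^ 2) := by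
      rw [hσ (n - 1) z, if_pos h2]
    rw [hσp, hσm, hσnz, hd1, hd2]
    set t : ℝ := (z / 2) ^ ((1 : ℝ) / 3) with htdef
    have h2t3 : 2 * t ^ 3 = z := by
      have h3 : t ^ (3 : ℕ) = z / 2 := by
        rw [htdef, ← Real.rpow_natCast ((z / 2) ^ ((1 : ℝ) / 3)) 3, ← Real.rpow_mul hx.le]
        norm_num
      rw [h3]; ring
    have hR := hrec n (3 * t ^ 2) (by nlinarith [mul_pos ht0 ht0])
    rw [if_neg hodd] at hR
    have hE : Real.exp (-(9 / 8) * t ^ 4 - 3 / 2 * (↑(n + 1) : ℝ) * t ^ 2) * Real.exp (-(9 / 8) * t ^ 4 - 3 / 2 * (↑(n - 1) : ℝ) * t ^ 2) = Real.exp (-(9 / 8) * t ^ 4 - 3 / 2 * (↑n : ℝ) * t ^ 2) * Real.exp (-(9 / 8) * t ^ 4 - 3 / 2 * (↑n : ℝ) * t ^ 2) := by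
      rw [← Real.exp_add, ← Real.exp_add]
      congr 1
      push_cast
      ring
    have hcc : (3 : ℝ) ^ ((1 : ℝ) / 4) * 3 ^ ((1 : ℝ) / 4) = Real.sqrt 3 := by
      rw [← Real.rpow_add (by norm_num : (0:ℝ) < 3), Real.sqrt_eq_rpow]
      norm_num
    have hs3 : Real.sqrt 3 * Real.sqrt 3 = 3 := Real.mul_self_sqrt (by norm_num)
    have hAA : t ^ ((7 : ℝ) / 24) * t ^ ((7 : ℝ) / 24) = t * (t ^ (-(5 : ℝ) / 24) * t ^ (-(5 : ℝ) / 24)) := by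
      have e1 : t ^ ((7 : ℝ) / 24) * t ^ ((7 : ℝ) / 24) = t ^ ((7 : ℝ) / 12) := by
        rw [← Real.rpow_add ht0]; norm_num
      have e2 : t ^ (-(5 : ℝ) / 24) * t ^ (-(5 : ℝ) / 24) = t ^ (-(5 : ℝ) / 12) := by
        rw [← Real.rpow_add ht0]; norm_num
      have e3 : t * t ^ (-(5 : ℝ) / 12) = t ^ ((7 : ℝ) / 12) := by
        calc t * t ^ (-(5 : ℝ) / 12) = t ^ (1 : ℝ) * t ^ (-(5 : ℝ) / 12) := by
              rw [Real.rpow_one]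
          _ = t ^ ((1 : ℝ) + -(5 : ℝ) / 12) := by rw [← Real.rpow_add ht0]
          _ = t ^ ((7 : ℝ) / 12) := by norm_num
      rw [e1, e2, e3]
    linear_combination final_even t z (ρ n (3 * t ^ 2)) (ρ (n + 1) (3 * t ^ 2)) (ρ (n - 1) (3 * t ^ 2)) (t ^ ((7 : ℝ) / 24)) (t ^ (-(5 : ℝ) / 24)) (Real.exp (-(9 / 8) * t ^ 4 - 3 / 2 * (↑n : ℝ) * t ^ 2)) (Real.exp (-(9 / 8) * t ^ 4 - 3 / 2 * (↑(n + 1) : ℝ) * t ^ 2)) (Real.exp (-(9 / 8) * t ^ 4 - 3 / 2 * (↑(n - 1) : ℝ) * t ^ 2)) (3 ^ ((1 : ℝ) / 4)) (Real.sqrt 3) ((((-(5 : ℝ) / 24) - 9 / 2 * t ^ 4 - 3 * (↑n : ℝ) * t ^ 2) * ρ n (3 * t ^ 2) + 6 * t ^ 2 * deriv (ρ n) (3 * t ^ 2))) ((((-(5 : ℝ) / 24) - 3 - 9 / 2 * t ^ 4 - 3 * (↑n : ℝ) * t ^ 2) * (((-(5 : ℝ) / 24) - 9 / 2 * t ^ 4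 - 3 * (↑n : ℝ) * t ^ 2) * ρ n (3 * t ^ 2) + 6 * t ^ 2 * deriv (ρ n) (3 * t ^ 2)) + ((-18 * t ^ 4 - 6 * (↑n : ℝ) * t ^ 2) * ρ n (3 * t ^ 2) + ((-(5 : ℝ) / 24) - 9 / 2 * t ^ 4 - 3 * (↑n : ℝ) * t ^ 2) * (6 * t ^ 2) * deriv (ρ n) (3 * t ^ 2) + 12 * t ^ 2 * deriv (ρ n) (3 * t ^ 2) + 36 * t ^ 4 * deriv (deriv (ρ n)) (3 * t ^ 2)))) (((3 * t ^ 2 + (↑n : ℝ)) * ρ n (3 * t ^ 2) ^ 2 - 2 * (3 * t ^ 2) * ρ n (3 * t ^ 2) * deriv (deriv (ρ n)) (3 * t ^ 2) + 2 * (3 * t ^ 2) * (deriv (ρ n) (3 * t ^ 2)) ^ 2 - 2 * ρ n (3 * t ^ 2) * deriv (ρ n) (3 * t ^ 2))) ht0 hz hE hcc hs3 hAA h2t3 (by ring) hR
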